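/- Let a and b be positive integers and let p be an odd prime such that p ≠ a, p ≠ b, p does not divide ab + 1, and p = ax² + by² for some integers x, y. Suppose that ab + 1 is not a perfect square. Then the equation aX² + bY² = (ab+1)p has exactly 8 integer solutions (X, Y), namely the pairs (ε(x + by), δ(ax − y)) and (ε(x − by), δ(ax + y)) for ε, δ ∈ {1, −1}. -/

import Mathlib

set_option maxHeartbeats 1000000

lemma posDvd (p : ℕ) (hp : p.Prime) (d : ℤ) (hd : 0 < d) (hdvd : d ∣ (p:ℤ)) :
    d = 1 ∨ d = (p:ℤ) := by
  lift d to ℕ using hd.le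
  rcases hp.eq_one_or_self_of_dvd d (by exact_mod_cast hdvd) with h | h <;>
    [left; right] <;> exact_mod_cast h

lemma card8 (u1 v1 u2 v2 : ℤ) (h1 : u1 ≠ 0) (h2 : v1 ≠ 0) (h3 : u2 ≠ 0) (h4 : v2 ≠ 0)
    (h5 : u1 ≠ u2) (h6 : u1 ≠ -u2) :
    ({(u1,v1),(u1,-v1),(-u1,v1),(-u1,-v1),(u2,v2),(u2,-v2),(-u2,v2),(-u2,-v2)} :
      Finset (ℤ×ℤ)).card = 8 := by
  rw [Finset.card_insert_of_notMem (by simp [Prod.ext_iff]; omega),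
      Finset.card_insert_of_notMem (by simp [Prod.ext_iff]; omega),
      Finset.card_insert_of_notMem (by simp [Prod.ext_iff]; omega),
      Finset.card_insert_of_notMem (by simp [Prod.ext_iff]; omega),
      Finset.card_insert_of_notMem (by simp [Prod.ext_iff]; omega),
      Finset.card_insert_of_notMem (by simp [Prod.ext_iff]; omega),
      Finset.card_insert_of_notMem (by simp [Prod.ext_iff]; omega),
      Finset.card_singleton]

theorem stmt18 (a b : ℤ) (ha : 0 < a) (hb : 0 < b)
    (p : ℕ) (hp : p.Prime) (hpodd : Odd p)
    (hpa : (p : ℤ) ≠ a) (hpb : (p : ℤ) ≠ b) (hpab : ¬ ((p : ℤ) ∣ a * b + 1))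
    (x y : ℤ) (hxy : (p : ℤ) = a * x ^ 2 + b * y ^ 2)
    (hns : ¬ IsSquare (a * b + 1)) :
    {XY : ℤ × ℤ | a * XY.1 ^ 2 + b * XY.2 ^ 2 = (a * b + 1) * (p : ℤ)}.ncard = 8 ∧
    {XY : ℤ × ℤ | a * XY.1 ^ 2 + b * XY.2 ^ 2 = (a * b + 1) * (p : ℤ)} =
      {XY : ℤ × ℤ | ∃ ε δ : ℤ, (ε = 1 ∨ ε = -1) ∧ (δ = 1 ∨ δ = -1) ∧
        (XY = (ε * (x + b * y), δ * (a * x - y)) ∨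
         XY = (ε * (x - b * y), δ * (a * x + y)))} := by
  have hp2 : (2:ℤ) ≤ p := by exact_mod_cast hp.two_le
  have hp0 : (p:ℤ) ≠ 0 := by positivity
  have hpZ : Prime (p:ℤ) := Nat.prime_iff_prime_int.mp hp
  have hx : x ≠ 0 := by
    rintro rfl
    rcases posDvd p hp b hb ⟨y^2, by linarith [hxy]⟩ with h | h
    · exact hpZ.not_isSquare ⟨y, by rw [h] at hxy; linarith⟩
    · exact hpb h.symm
  have hy : y ≠ 0 := by
    rintro rfl
    rcases posDvd p hp a ha ⟨x^2, by linarith [hxy]⟩ with h | h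
    · exact hpZ.not_isSquare ⟨x, by rw [h] at hxy; linarith⟩
    · exact hpa h.symm
  have hax : 1 ≤ x^2 := by rcases hx.lt_or_gt with h|h <;> nlinarith
  have hby : 1 ≤ y^2 := by rcases hy.lt_or_gt with h|h <;> nlinarith
  have hpa2 : ¬ (p:ℤ) ∣ a := by
    intro h
    have : (p:ℤ) ≤ a := Int.le_of_dvd ha h
    nlinarith
  have hpb2 : ¬ (p:ℤ) ∣ b := by
    intro h
    have : (p:ℤ) ≤ b := Int.le_of_dvd hb h
    nlinarith
  have hab1 : ¬ ((a*b+1) ∣ (p:ℤ)) := by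
    intro h
    rcases posDvd p hp (a*b+1) (by positivity) h with h' | h'
    · nlinarith
    · exact hpab (h' ▸ dvd_refl _)
  have h1 : x + b*y ≠ 0 := fun h => hab1 ⟨b*y^2, by linear_combination hxy + a*(x - b*y)*h⟩
  have h2 : x - b*y ≠ 0 := fun h => hab1 ⟨b*y^2, by linear_combination hxy + a*(x + b*y)*h⟩
  have h3 : a*x - y ≠ 0 := fun h => hab1 ⟨a*x^2, by linear_combination hxy - b*(a*x + y)*h⟩
  have h4 : a*x + y ≠ 0 := fun h => hab1 ⟨a*x^2, by linear_combination hxy - b*(a*x - y)*h⟩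
  have habt : (1:ℤ) ≤ a*b := by nlinarith
  -- main forward direction
  have main : ∀ X Y : ℤ, a * X ^ 2 + b * Y ^ 2 = (a * b + 1) * (p : ℤ) →
      ∃ ε δ : ℤ, (ε = 1 ∨ ε = -1) ∧ (δ = 1 ∨ δ = -1) ∧
        (((X, Y) : ℤ × ℤ) = (ε * (x + b * y), δ * (a * x - y)) ∨
         ((X, Y) : ℤ × ℤ) = (ε * (x - b * y), δ * (a * x + y))) := by
    intro X Y hXY
    have key : (p:ℤ) ∣ (a*X*x + b*Y*y) * (a*X*x - b*Y*y) :=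
      ⟨a*x^2*(a*b+1) - b*Y^2, by linear_combination (a*x^2) * hXY + (b*Y^2) * hxy⟩
    rcases hpZ.dvd_mul.mp key with hc | hc
    · -- p ∣ aXx + bYy
      have hI : (a*X*x + b*Y*y)^2 + a*b*(X*y - Y*x)^2 = (a*b+1)*(p:ℤ)*(p:ℤ) := by
        linear_combination (a*x^2 + b*y^2) * hXY - (a*b+1)*(p:ℤ) * hxy
      obtain ⟨s, hs⟩ := hc
      have hvd : (p:ℤ) ∣ X*y - Y*x := by
        have hd : (p:ℤ) ∣ a*b*(X*y - Y*x)^2 :=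
          ⟨(a*b+1)*(p:ℤ) - (p:ℤ)*s^2, by
            linear_combination hI - (a*X*x + b*Y*y + (p:ℤ)*s) * hs⟩
        rcases hpZ.dvd_mul.mp hd with h' | h'
        · rcases hpZ.dvd_mul.mp h' with h'' | h''
          · exact absurd h'' hpa2
          · exact absurd h'' hpb2
        · exact hpZ.dvd_of_dvd_pow h'
      obtain ⟨t, ht⟩ := hvd
      have hst : s^2 + a*b*t^2 = a*b+1 := by
        have h0 : (p:ℤ)^2 ≠ 0 := pow_ne_zero _ hp0
        refine mul_left_cancel₀ h0 ?_
        linear_combination hI - (a*X*x + b*Y*y + (p:ℤ)*s)*hs - a*b*(X*y - Y*x + (p:ℤ)*t)*ht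
      have ht0 : t ≠ 0 := by
        rintro rfl
        exact hns ⟨s, by linear_combination -hst⟩
      have l1 : 1 ≤ t^2 := by rcases ht0.lt_or_gt with h|h <;> nlinarith
      have l2 : t^2 ≤ 2 := by nlinarith [sq_nonneg s, mul_nonneg (by linarith : (0:ℤ) ≤ a*b - 1) (by linarith : (0:ℤ) ≤ t^2 - 1)]
      have ht1 : t = 1 ∨ t = -1 := by
        have : t ≤ 1 := by nlinarith [sq_nonneg (t-2)]
        have : -1 ≤ t := by nlinarith [sq_nonneg (t+2)]
        omega
      have hs2 : s^2 = 1 := by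
        rcases ht1 with rfl | rfl <;> linarith
      have hs1 : s = 1 ∨ s = -1 := by
        have : (s-1)*(s+1) = 0 := by linear_combination hs2
        rcases mul_eq_zero.mp this with h|h
        · left; linarith
        · right; linarith
      have hX : X = s*x + b*y*t :=
        mul_left_cancel₀ hp0 (by linear_combination x*hs + b*y*ht + X*hxy)
      have hY : Y = s*y - a*x*t :=
        mul_left_cancel₀ hp0 (by linear_combination y*hs - a*x*ht + Y*hxy)
      rcases hs1 with rfl | rfl <;> rcases ht1 with rfl | rfl
      · exact ⟨1, -1, Or.inl rfl, Or.inr rfl, Or.inl (by rw [Prod.mk.injEq]; exact ⟨by rw [hX]; ring, by rw [hY]; ring⟩)⟩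
      · exact ⟨1, 1, Or.inl rfl, Or.inl rfl, Or.inr (by rw [Prod.mk.injEq]; exact ⟨by rw [hX]; ring, by rw [hY]; ring⟩)⟩
      · exact ⟨-1, -1, Or.inr rfl, Or.inr rfl, Or.inr (by rw [Prod.mk.injEq]; exact ⟨by rw [hX]; ring, by rw [hY]; ring⟩)⟩
      · exact ⟨-1, 1, Or.inr rfl, Or.inl rfl, Or.inl (by rw [Prod.mk.injEq]; exact ⟨by rw [hX]; ring, by rw [hY]; ring⟩)⟩
    · -- p ∣ aXx - bYy
      have hI : (a*X*x - b*Y*y)^2 + a*b*(X*y + Y*x)^2 = (a*b+1)*(p:ℤ)*(p:ℤ) := by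
        linear_combination (a*x^2 + b*y^2) * hXY - (a*b+1)*(p:ℤ) * hxy
      obtain ⟨s, hs⟩ := hc
      have hvd : (p:ℤ) ∣ X*y + Y*x := by
        have hd : (p:ℤ) ∣ a*b*(X*y + Y*x)^2 :=
          ⟨(a*b+1)*(p:ℤ) - (p:ℤ)*s^2, by
            linear_combination hI - (a*X*x - b*Y*y + (p:ℤ)*s) * hs⟩
        rcases hpZ.dvd_mul.mp hd with h' | h'
        · rcases hpZ.dvd_mul.mp h' with h'' | h''
          · exact absurd h'' hpa2
          · exact absurd h'' hpb2
        · exact hpZ.dvd_of_dvd_pow h'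
      obtain ⟨t, ht⟩ := hvd
      have hst : s^2 + a*b*t^2 = a*b+1 := by
        have h0 : (p:ℤ)^2 ≠ 0 := pow_ne_zero _ hp0
        refine mul_left_cancel₀ h0 ?_
        linear_combination hI - (a*X*x - b*Y*y + (p:ℤ)*s)*hs - a*b*(X*y + Y*x + (p:ℤ)*t)*ht
      have ht0 : t ≠ 0 := by
        rintro rfl
        exact hns ⟨s, by linear_combination -hst⟩
      have l1 : 1 ≤ t^2 := by rcases ht0.lt_or_gt with h|h <;> nlinarith
      have l2 : t^2 ≤ 2 := by nlinarith [sq_nonneg s, mul_nonneg (by linarith : (0:ℤ) ≤ a*b - 1) (by linarith : (0:ℤ) ≤ t^2 - 1)]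
      have ht1 : t = 1 ∨ t = -1 := by
        have : t ≤ 1 := by nlinarith [sq_nonneg (t-2)]
        have : -1 ≤ t := by nlinarith [sq_nonneg (t+2)]
        omega
      have hs2 : s^2 = 1 := by
        rcases ht1 with rfl | rfl <;> linarith
      have hs1 : s = 1 ∨ s = -1 := by
        have : (s-1)*(s+1) = 0 := by linear_combination hs2
        rcases mul_eq_zero.mp this with h|h
        · left; linarith
        · right; linarith
      have hX : X = s*x + b*y*t :=
        mul_left_cancel₀ hp0 (by linear_combination x*hs + b*y*ht + X*hxy)
      have hY : Y = a*x*t - s*y :=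
        mul_left_cancel₀ hp0 (by linear_combination -y*hs + a*x*ht + Y*hxy)
      rcases hs1 with rfl | rfl <;> rcases ht1 with rfl | rfl
      · exact ⟨1, 1, Or.inl rfl, Or.inl rfl, Or.inl (by rw [Prod.mk.injEq]; exact ⟨by rw [hX]; ring, by rw [hY]; ring⟩)⟩
      · exact ⟨1, -1, Or.inl rfl, Or.inr rfl, Or.inr (by rw [Prod.mk.injEq]; exact ⟨by rw [hX]; ring, by rw [hY]; ring⟩)⟩
      · exact ⟨-1, 1, Or.inr rfl, Or.inl rfl, Or.inr (by rw [Prod.mk.injEq]; exact ⟨by rw [hX]; ring, by rw [hY]; ring⟩)⟩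
      · exact ⟨-1, -1, Or.inr rfl, Or.inr rfl, Or.inl (by rw [Prod.mk.injEq]; exact ⟨by rw [hX]; ring, by rw [hY]; ring⟩)⟩
  -- set equality
  have hset : {XY : ℤ × ℤ | a * XY.1 ^ 2 + b * XY.2 ^ 2 = (a * b + 1) * (p : ℤ)} =
      {XY : ℤ × ℤ | ∃ ε δ : ℤ, (ε = 1 ∨ ε = -1) ∧ (δ = 1 ∨ δ = -1) ∧
        (XY = (ε * (x + b * y), δ * (a * x - y)) ∨
         XY = (ε * (x - b * y), δ * (a * x + y)))} := by
    ext ⟨X, Y⟩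
    simp only [Set.mem_setOf_eq]
    constructor
    · exact main X Y
    · rintro ⟨ε, δ, (rfl|rfl), (rfl|rfl), (h|h)⟩ <;>
        (rw [Prod.mk.injEq] at h; obtain ⟨rfl, rfl⟩ := h) <;>
        linear_combination (-(a*b+1)) * hxy
  refine ⟨?_, hset⟩
  -- cardinality
  have hT : {XY : ℤ × ℤ | ∃ ε δ : ℤ, (ε = 1 ∨ ε = -1) ∧ (δ = 1 ∨ δ = -1) ∧
        (XY = (ε * (x + b * y), δ * (a * x - y)) ∨
         XY = (ε * (x - b * y), δ * (a * x + y)))} =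
      (({(x+b*y, a*x-y),(x+b*y, -(a*x-y)),(-(x+b*y), a*x-y),(-(x+b*y), -(a*x-y)),
         (x-b*y, a*x+y),(x-b*y, -(a*x+y)),(-(x-b*y), a*x+y),(-(x-b*y), -(a*x+y))} :
        Finset (ℤ×ℤ)) : Set (ℤ×ℤ)) := by
    ext XY
    simp only [Set.mem_setOf_eq, Finset.coe_insert, Set.mem_insert_iff, Finset.coe_singleton,
      Set.mem_singleton_iff]
    constructor
    · rintro ⟨ε, δ, (rfl|rfl), (rfl|rfl), (rfl|rfl)⟩ <;> norm_num
    · rintro (rfl|rfl|rfl|rfl|rfl|rfl|rfl|rfl)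
      · exact ⟨1, 1, Or.inl rfl, Or.inl rfl, Or.inl (by norm_num)⟩
      · exact ⟨1, -1, Or.inl rfl, Or.inr rfl, Or.inl (by norm_num)⟩
      · exact ⟨-1, 1, Or.inr rfl, Or.inl rfl, Or.inl (by norm_num)⟩
      · exact ⟨-1, -1, Or.inr rfl, Or.inr rfl, Or.inl (by norm_num)⟩
      · exact ⟨1, 1, Or.inl rfl, Or.inl rfl, Or.inr (by norm_num)⟩
      · exact ⟨1, -1, Or.inl rfl, Or.inr rfl, Or.inr (by norm_num)⟩
      · exact ⟨-1, 1, Or.inr rfl, Or.inl rfl, Or.inr (by norm_num)⟩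
      · exact ⟨-1, -1, Or.inr rfl, Or.inr rfl, Or.inr (by norm_num)⟩
  rw [hset, hT, Set.ncard_coe_finset]
  refine card8 _ _ _ _ h1 h3 h2 h4 ?_ ?_
  · intro h
    have hb0 : b*y = 0 := by linarith
    rcases mul_eq_zero.mp hb0 with h'|h'
    · exact absurd h' (by linarith)
    · exact hy h'
  · intro h
    exact hx (by linarith)
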